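/- Let (M, ≤, ⊙, t, →, ⇝) be a pointed residuated po-monoid. Then the following are equivalent: (i) for every a in M, t ≤ (a ⇝ t) → (a → t); (ii) for all x, y in M, if x ⊙ y ≤ t then y ⊙ x ≤ t. (The weak commutativity axiom (WCM) holds in a residuated po-monoid exactly when the monoid operation is weakly commutative at the unit, which is the semantic counterpart of the structural rule (WCM): from Γ, Δ ⇒ t infer Δ, Γ ⇒ t.) -/
import Mathlib

theorem wcm_iff_weakly_commutative {M : Type*} [PartialOrder M]
    (odot : M → M → M) (t : M) (imp limp : M → M → M)
    (hassoc : ∀ x y z, odot (odot x y) z = odot x (odot y z))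
    (hone : ∀ x, odot t x = x) (hone' : ∀ x, odot x t = x)
    (hres : ∀ x y z, odot x y ≤ z ↔ y ≤ imp x z)
    (hres' : ∀ x y z, odot x y ≤ z ↔ x ≤ limp y z) :
    (∀ a, t ≤ imp (limp a t) (imp a t)) ↔ (∀ x y, odot x y ≤ t → odot y x ≤ t) := by
  constructor
  · intro h x y hxy
    have h1 : x ≤ limp y t := (hres' x y t).mp hxy
    have h2 : limp y t ≤ imp y t := by
      have h3 := (hres (limp y t) t (imp y t)).mpr (h y)
      rwa [hone'] at h3
    exact (hres y x t).mpr (h1.trans h2)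
  · intro h a
    have h1 : odot (limp a t) a ≤ t := (hres' _ a t).mpr le_rfl
    have h2 : odot a (limp a t) ≤ t := h _ _ h1
    have h3 : limp a t ≤ imp a t := (hres a _ t).mp h2
    refine (hres (limp a t) t (imp a t)).mp ?_
    rwa [hone']
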